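/- If G is a graph whose vertex set is not a stable set, then thin(G) ≤ |V(G)| − α(G), where α(G) is the maximum size of a stable set in G. -/

import Mathlib

open SimpleGraph

/-- An ordering (given by an injective rank function `f`) and a partition (given by a
coloring `c`) are consistent: for `r < s < t`, if `r, s` are in the same class and
`t` is adjacent to `r`, then `t` is adjacent to `s`. -/
def Consistent {V : Type*} (G : SimpleGraph V) (f : V → ℕ) (c : V → ℕ) : Prop :=
  ∀ r s t : V, f r < f s → f s < f t → c r = c s → G.Adj t r → G.Adj t s

/-- Strong consistency: consistency with the ordering and with its reverse. -/
def StronglyConsistent {V : Type*} (G : SimpleGraph V) (f : V → ℕ) (c : V → ℕ) : Prop :=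
  Consistent G f c ∧
    ∀ r s t : V, f r < f s → f s < f t → c s = c t → G.Adj t r → G.Adj s r

/-- The thinness of a graph. -/
noncomputable def thin {V : Type*} (G : SimpleGraph V) : ℕ :=
  sInf {k | ∃ f c : V → ℕ, Function.Injective f ∧ (∀ v, c v < k) ∧ Consistent G f c}

/-- The proper thinness of a graph. -/
noncomputable def pthin {V : Type*} (G : SimpleGraph V) : ℕ :=
  sInf {k | ∃ f c : V → ℕ, Function.Injective f ∧ (∀ v, c v < k) ∧ StronglyConsistent G f c}

/-- Independent thinness: classes must be independent sets. -/
noncomputable def indthin {V : Type*} (G : SimpleGraph V) : ℕ :=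
  sInf {k | ∃ f c : V → ℕ, Function.Injective f ∧ (∀ v, c v < k) ∧ Consistent G f c ∧
    ∀ u v : V, c u = c v → ¬ G.Adj u v}

/-- Independent proper thinness. -/
noncomputable def indpthin {V : Type*} (G : SimpleGraph V) : ℕ :=
  sInf {k | ∃ f c : V → ℕ, Function.Injective f ∧ (∀ v, c v < k) ∧ StronglyConsistent G f c ∧
    ∀ u v : V, c u = c v → ¬ G.Adj u v}

/-- Complete thinness: classes must be cliques. -/
noncomputable def compthin {V : Type*} (G : SimpleGraph V) : ℕ :=
  sInf {k | ∃ f c : V → ℕ, Function.Injective f ∧ (∀ v, c v < k) ∧ Consistent G f c ∧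
    ∀ u v : V, u ≠ v → c u = c v → G.Adj u v}

/-- Complete proper thinness. -/
noncomputable def comppthin {V : Type*} (G : SimpleGraph V) : ℕ :=
  sInf {k | ∃ f c : V → ℕ, Function.Injective f ∧ (∀ v, c v < k) ∧ StronglyConsistent G f c ∧
    ∀ u v : V, u ≠ v → c u = c v → G.Adj u v}

/-- The incompatibility graph `G_<` of a graph and an ordering: for `v < w`,
`vw` is an edge iff there is `z > w` adjacent to `v` but not to `w`. -/
def incompat {V : Type*} (G : SimpleGraph V) (f : V → ℕ) : SimpleGraph V where
  Adj v w :=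
    (f v < f w ∧ ∃ z, f w < f z ∧ G.Adj z v ∧ ¬ G.Adj z w) ∨
    (f w < f v ∧ ∃ z, f v < f z ∧ G.Adj z w ∧ ¬ G.Adj z v)
  symm := ⟨fun v w h => h.symm⟩
  loopless := ⟨fun v h => by rcases h with ⟨h, _⟩ | ⟨h, _⟩ <;> exact lt_irrefl _ h⟩

/-- The join of two graphs. -/
def joinG {V₁ V₂ : Type*} (G₁ : SimpleGraph V₁) (G₂ : SimpleGraph V₂) :
    SimpleGraph (V₁ ⊕ V₂) where
  Adj x y := match x, y with
    | Sum.inl u, Sum.inl v => G₁.Adj u v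
    | Sum.inr u, Sum.inr v => G₂.Adj u v
    | Sum.inl _, Sum.inr _ => True
    | Sum.inr _, Sum.inl _ => True
  symm := by refine ⟨?_⟩
             rintro (u | u) (v | v) h
             · exact G₁.symm.symm _ _ h
             · trivial
             · trivial
             · exact G₂.symm.symm _ _ h
  loopless := by refine ⟨?_⟩
                 rintro (u | u) h
                 · exact G₁.loopless.irrefl u h
                 · exact G₂.loopless.irrefl u h

/-- A graph is complete iff all pairs of distinct vertices are adjacent. -/
def IsCompleteGraph {V : Type*} (G : SimpleGraph V) : Prop :=
  ∀ u v : V, u ≠ v → G.Adj u v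

/-- The clique number of a graph. -/
noncomputable def omegaNum {V : Type*} (G : SimpleGraph V) : ℕ :=
  sSup {n | ∃ s : Finset V, s.card = n ∧ ∀ u ∈ s, ∀ v ∈ s, u ≠ v → G.Adj u v}

/-- The independence number of a graph. -/
noncomputable def alphaNum {V : Type*} (G : SimpleGraph V) : ℕ :=
  sSup {n | ∃ s : Finset V, s.card = n ∧ ∀ u ∈ s, ∀ v ∈ s, u ≠ v → ¬ G.Adj u v}


section AuxThin

variable {V : Type*} [Fintype V] [DecidableEq V]

/-- Auxiliary tier function. -/
noncomputable def auxTier (G : SimpleGraph V) (S : Finset V) (u v : V) : ℕ :=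
  open Classical in
  if v = u then 3 else if v ∈ S then (if G.Adj u v then 2 else 1) else 0

/-- Index of a vertex in a fixed listing of all vertices. -/
noncomputable def auxIdx (v : V) : ℕ := List.idxOf v Finset.univ.toList

lemma auxIdx_lt (v : V) : auxIdx v < Fintype.card V := by
  have hv : v ∈ (Finset.univ : Finset V).toList := by simp
  have := List.idxOf_lt_length_iff.2 hv
  simpa [auxIdx, Finset.length_toList] using this

lemma auxIdx_inj {v w : V} (h : auxIdx v = auxIdx w) : v = w := by
  have hv : v ∈ (Finset.univ : Finset V).toList := by simp
  have hw : w ∈ (Finset.univ : Finset V).toList := by simp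
  have hv' := List.idxOf_lt_length_iff.2 hv
  have hw' := List.idxOf_lt_length_iff.2 hw
  have h1 := List.idxOf_get hv'
  have h2 := List.idxOf_get hw'
  rw [← h1, ← h2]
  simp [auxIdx] at h
  simp [h]

/-- The ordering function. -/
noncomputable def auxF (G : SimpleGraph V) (S : Finset V) (u v : V) : ℕ :=
  Fintype.card V * auxTier G S u v + auxIdx v

lemma auxTier_le_of_lt {G : SimpleGraph V} {S : Finset V} {u a b : V}
    (h : auxF G S u a < auxF G S u b) : auxTier G S u a ≤ auxTier G S u b := by
  by_contra hc
  push_neg at hc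
  have h1 : auxTier G S u b + 1 ≤ auxTier G S u a := hc
  have hia := auxIdx_lt a
  have hib := auxIdx_lt b
  have : Fintype.card V * (auxTier G S u b + 1) ≤ Fintype.card V * auxTier G S u a :=
    Nat.mul_le_mul_left _ h1
  rw [Nat.mul_add, Nat.mul_one] at this
  simp only [auxF] at h
  omega

lemma auxF_inj (G : SimpleGraph V) (S : Finset V) (u : V) :
    Function.Injective (auxF G S u) := by
  intro a b hab
  have h1 : auxTier G S u a ≤ auxTier G S u b := by
    by_contra hc
    push_neg at hc
    have hia := auxIdx_lt a
    have hib := auxIdx_lt b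
    have : Fintype.card V * (auxTier G S u b + 1) ≤ Fintype.card V * auxTier G S u a :=
      Nat.mul_le_mul_left _ hc
    rw [Nat.mul_add, Nat.mul_one] at this
    simp only [auxF] at hab
    omega
  have h2 : auxTier G S u b ≤ auxTier G S u a := by
    by_contra hc
    push_neg at hc
    have hia := auxIdx_lt a
    have hib := auxIdx_lt b
    have : Fintype.card V * (auxTier G S u a + 1) ≤ Fintype.card V * auxTier G S u b :=
      Nat.mul_le_mul_left _ hc
    rw [Nat.mul_add, Nat.mul_one] at this
    simp only [auxF] at hab
    omega
  have ht : auxTier G S u a = auxTier G S u b := le_antisymm h1 h2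
  have : auxIdx a = auxIdx b := by
    simp only [auxF, ht] at hab
    omega
  exact auxIdx_inj this

lemma auxTier_eq_three_iff {G : SimpleGraph V} {S : Finset V} {u v : V}
    (h : 3 ≤ auxTier G S u v) : v = u := by
  by_contra hv
  simp only [auxTier, if_neg hv] at h
  split_ifs at h <;> omega

end AuxThin

/-- If the vertex set of `G` is not a stable set, then `thin G ≤ |V(G)| - α(G)`. -/
theorem thin_le_card_sub_alpha {V : Type*} [Fintype V] (G : SimpleGraph V)
    (h : ∃ u v : V, G.Adj u v) :
    thin G ≤ Fintype.card V - alphaNum G := by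
  classical
  obtain ⟨u0, v0, huv⟩ := h
  -- the independence number is attained
  set A : Set ℕ :=
    {n | ∃ s : Finset V, s.card = n ∧ ∀ u ∈ s, ∀ v ∈ s, u ≠ v → ¬ G.Adj u v} with hA
  have hne : A.Nonempty := ⟨0, ∅, by simp⟩
  have hbdd : BddAbove A := by
    refine ⟨Fintype.card V, ?_⟩
    rintro n ⟨s, hs, -⟩
    exact hs ▸ s.card_le_univ.trans_eq (Finset.card_univ)
  have hmem : alphaNum G ∈ A := by
    have := Nat.sSup_mem hne hbdd
    simpa [alphaNum, hA] using this
  obtain ⟨S, hScard, hSstable⟩ := hmem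
  -- a vertex outside S
  have hexu : ∃ u : V, u ∉ S := by
    by_contra hc
    push_neg at hc
    exact hSstable u0 (hc u0) v0 (hc v0) (G.ne_of_adj huv) huv
  obtain ⟨u, hu⟩ := hexu
  have hScard_lt : S.card < Fintype.card V := by
    rw [← Finset.card_univ]
    exact Finset.card_lt_card ⟨S.subset_univ, fun hsub => hu (hsub (Finset.mem_univ u))⟩
  have halpha_lt : alphaNum G < Fintype.card V := hScard ▸ hScard_lt
  -- the coloring
  set T : Finset V := (Finset.univ \ S).erase u with hT
  have hTcard : T.card = Fintype.card V - alphaNum G - 1 := by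
    have huT : u ∈ Finset.univ \ S := by simp [hu]
    rw [hT, Finset.card_erase_of_mem huT, Finset.card_sdiff_of_subset (Finset.subset_univ S),
      Finset.card_univ, hScard]
  set f : V → ℕ := auxF G S u with hf
  set c : V → ℕ := fun v => if v = u ∨ v ∈ S then 0 else 1 + List.idxOf v T.toList
    with hc
  have hmemT : ∀ v : V, ¬(v = u ∨ v ∈ S) → v ∈ T.toList := by
    intro v hv
    push_neg at hv
    simp [hT, Finset.mem_toList, hv.1, hv.2]
  have hcbound : ∀ v, c v < Fintype.card V - alphaNum G := by
    intro v
    by_cases hv : v = u ∨ v ∈ S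
    · simp only [hc, if_pos hv]; omega
    · have hmem' := hmemT v hv
      have hlt := List.idxOf_lt_length_iff.2 hmem'
      rw [Finset.length_toList] at hlt
      simp only [hc, if_neg hv]
      omega
  -- tier facts
  have tier_u : auxTier G S u u = 3 := by simp [auxTier]
  have tier_notS : ∀ v, v ≠ u → v ∉ S → auxTier G S u v = 0 := by
    intro v h1 h2; simp [auxTier, h1, h2]
  have tier_S : ∀ v, v ≠ u → v ∈ S → 1 ≤ auxTier G S u v ∧ auxTier G S u v ≤ 2 := by
    intro v h1 h2
    simp only [auxTier, if_neg h1, if_pos h2]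
    split_ifs <;> omega
  have tier_S_adj : ∀ v, v ≠ u → v ∈ S → G.Adj u v → auxTier G S u v = 2 := by
    intro v h1 h2 h3
    simp [auxTier, h1, h2, h3]
  have tier_S_two : ∀ v, v ≠ u → v ∈ S → auxTier G S u v = 2 → G.Adj u v := by
    intro v h1 h2 h3
    simp only [auxTier, if_neg h1, if_pos h2] at h3
    split_ifs at h3 with hh
    · exact hh
    · omega
  -- consistency
  have hcons : Consistent G f c := by
    intro r s t hrs hst hcrs hadj
    by_cases hr : r = u ∨ r ∈ S
    · -- r in the class of S ∪ {u}
      have hcr : c r = 0 := by simp [hc, hr]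
      have hs : s = u ∨ s ∈ S := by
        by_contra hs'
        have : c s = 1 + List.idxOf s T.toList := by simp [hc, hs']
        omega
      -- s ≠ u since there is t after s
      have hsu : s ≠ u := by
        intro hsu
        have h3 : 3 ≤ auxTier G S u t := by
          have := auxTier_le_of_lt (G := G) (S := S) (u := u) hst
          rw [hsu, tier_u] at this
          exact this
        have ht' : t = u := auxTier_eq_three_iff h3
        rw [hsu, ht'] at hst
        exact lt_irrefl _ hst
      have hsS : s ∈ S := hs.resolve_left hsu
      -- r ≠ u since r < s and u is last
      have hru : r ≠ u := by
        intro hru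
        have h3 : 3 ≤ auxTier G S u s := by
          have := auxTier_le_of_lt (G := G) (S := S) (u := u) hrs
          rw [hru, tier_u] at this
          exact this
        exact hsu (auxTier_eq_three_iff h3)
      have hrS : r ∈ S := hr.resolve_left hru
      -- t has tier ≥ 1, so t = u or t ∈ S
      have hts := auxTier_le_of_lt (G := G) (S := S) (u := u) hst
      have hs1 : 1 ≤ auxTier G S u s := (tier_S s hsu hsS).1
      by_cases htu : t = u
      · -- t = u : adjacency to r means tier r = 2, hence tier s = 2, hence adj u s
        rw [htu] at hadj ⊢
        have hr2 : auxTier G S u r = 2 := tier_S_adj r hru hrS hadj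
        have hrs' := auxTier_le_of_lt (G := G) (S := S) (u := u) hrs
        have hs2 : auxTier G S u s = 2 := by
          have := (tier_S s hsu hsS).2
          omega
        exact tier_S_two s hsu hsS hs2
      · -- t ∈ S : contradiction with stability
        have htS : t ∈ S := by
          by_contra htS
          have := tier_notS t htu htS
          omega
        exact absurd hadj (hSstable t htS r hrS (G.ne_of_adj hadj))
    · -- r in a singleton class
      exfalso
      have hcr : c r = 1 + List.idxOf r T.toList := by simp [hc, hr]
      have hs' : ¬(s = u ∨ s ∈ S) := by
        intro hs'
        have : c s = 0 := by simp [hc, hs']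
        omega
      have hcs : c s = 1 + List.idxOf s T.toList := by simp [hc, hs']
      have hidx : List.idxOf r T.toList = List.idxOf s T.toList := by omega
      have hrl := hmemT r hr
      have hsl := hmemT s hs'
      have hr' := List.idxOf_lt_length_iff.2 hrl
      have hs'' := List.idxOf_lt_length_iff.2 hsl
      have h1 := List.idxOf_get hr'
      have h2 := List.idxOf_get hs''
      have : r = s := by
        rw [← h1, ← h2]; simp [hidx]
      rw [this] at hrs
      exact lt_irrefl _ hrs
  -- conclude
  have : Fintype.card V - alphaNum G ∈
      {k | ∃ f c : V → ℕ, Function.Injective f ∧ (∀ v, c v < k) ∧ Consistent G f c} :=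
    ⟨f, c, auxF_inj G S u, hcbound, hcons⟩
  exact Nat.sInf_le this
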